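/- arXiv:1802.08700 — 2 statements merged into one kernel-verified Lean document; each statement's English description precedes it below -/
import Mathlib

section
/- Let x₂, …, xₙ be natural numbers, all at least 1. Then A(x₂, …, xₙ) ≥ min over 2 ≤ i ≤ n of A(x₂, …, xᵢ − 1, …, xₙ), where in the i-th term the pile xᵢ is decreased by 1 and all other piles are unchanged. -/
lemma sum_update_lt {n : ℕ} (x : Fin n → ℕ) (i : Fin n) (v : ℕ) (h : v < x i) :
    (∑ j, Function.update x i v j) < ∑ j, x j := by
  apply Finset.sum_lt_sum
  · intro j _
    rcases eq_or_ne j i with rfl | hj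
    · simpa using h.le
    · simp [Function.update_of_ne hj]
  · exact ⟨i, Finset.mem_univ i, by simpa using h⟩

/-- Sprague–Grundy value of the Auxiliary Nim game
`(*a) ⊞ ((*x 0) ⊕ ⋯ ⊕ (*x (n-1)))`, where `x : Fin n → ℕ` lists the piles
`x₂, …, xₙ` and `a` is the auxiliary pile `x₁`.  It is the mex of the
Sprague–Grundy values of the one-move successors: strictly decrease `a`,
or strictly decrease exactly one of the piles `x i`, or do both. -/
noncomputable def NAux {n : ℕ} (a : ℕ) (x : Fin n → ℕ) : ℕ :=
  sInf {m : ℕ |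
    (∀ a', a' < a → NAux a' x ≠ m) ∧
    (∀ (i : Fin n) (v : ℕ), v < x i → NAux a (Function.update x i v) ≠ m) ∧
    (∀ a', a' < a → ∀ (i : Fin n) (v : ℕ), v < x i →
      NAux a' (Function.update x i v) ≠ m)}
termination_by a + ∑ j, x j
decreasing_by
  · exact Nat.add_lt_add_right ‹_› _
  · exact Nat.add_lt_add_left (sum_update_lt x i v ‹_›) a
  · exact Nat.add_lt_add ‹_› (sum_update_lt x i v ‹_›)

/-- `AAux x` is the least `a` such that `NAux a x = a + ∑ i, x i`. -/
noncomputable def AAux {n : ℕ} (x : Fin n → ℕ) : ℕ :=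
  sInf {a : ℕ | NAux a x = a + ∑ i, x i}

def TAux {n : ℕ} (a : ℕ) (x : Fin n → ℕ) : Set ℕ :=
  {m : ℕ |
    (∀ a', a' < a → NAux a' x ≠ m) ∧
    (∀ (i : Fin n) (v : ℕ), v < x i → NAux a (Function.update x i v) ≠ m) ∧
    (∀ a', a' < a → ∀ (i : Fin n) (v : ℕ), v < x i →
      NAux a' (Function.update x i v) ≠ m)}

lemma NAux_eq {n : ℕ} (a : ℕ) (x : Fin n → ℕ) : NAux a x = sInf (TAux a x) := by
  rw [NAux]; rfl

lemma sum_update_add {n : ℕ} (x : Fin n → ℕ) (i : Fin n) (v : ℕ) :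
    (∑ j, Function.update x i v j) + x i = (∑ j, x j) + v := by
  rw [Finset.sum_update_of_mem (Finset.mem_univ i), Finset.sdiff_singleton_eq_erase,
    ← Finset.add_sum_erase Finset.univ x (Finset.mem_univ i)]
  ring

lemma mem_TAux_total {n : ℕ} (a : ℕ) (x : Fin n → ℕ) :
    (a + ∑ j, x j) ∈ TAux a x ∧ NAux a x ≤ a + ∑ j, x j := by
  constructor
  · refine ⟨fun a' ha' h => ?_, fun i v hv h => ?_, fun a' ha' i v hv h => ?_⟩
    · have := (mem_TAux_total a' x).2
      omega
    · have := (mem_TAux_total a (Function.update x i v)).2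
      have h2 := sum_update_add x i v
      omega
    · have := (mem_TAux_total a' (Function.update x i v)).2
      have h2 := sum_update_add x i v
      omega
  · rw [NAux_eq]
    apply Nat.sInf_le
    refine ⟨fun a' ha' h => ?_, fun i v hv h => ?_, fun a' ha' i v hv h => ?_⟩
    · have := (mem_TAux_total a' x).2
      omega
    · have := (mem_TAux_total a (Function.update x i v)).2
      have h2 := sum_update_add x i v
      omega
    · have := (mem_TAux_total a' (Function.update x i v)).2
      have h2 := sum_update_add x i v
      omega
termination_by a + ∑ j, x j
decreasing_by
  · exact Nat.add_lt_add_right ha' _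
  · exact Nat.add_lt_add_left (sum_update_lt x i v hv) a
  · exact Nat.add_lt_add ha' (sum_update_lt x i v hv)
  · exact Nat.add_lt_add_right ha' _
  · exact Nat.add_lt_add_left (sum_update_lt x i v hv) a
  · exact Nat.add_lt_add ha' (sum_update_lt x i v hv)

lemma NAux_le_total {n : ℕ} (a : ℕ) (x : Fin n → ℕ) : NAux a x ≤ a + ∑ j, x j :=
  (mem_TAux_total a x).2

lemma NAux_mem {n : ℕ} (a : ℕ) (x : Fin n → ℕ) : NAux a x ∈ TAux a x := by
  rw [NAux_eq]
  exact Nat.sInf_mem ⟨_, (mem_TAux_total a x).1⟩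

lemma NAux_not_mem_of_lt {n : ℕ} {a m : ℕ} {x : Fin n → ℕ} (h : m < NAux a x) :
    m ∉ TAux a x := by
  rw [NAux_eq] at h
  exact Nat.notMem_of_lt_sInf h

lemma NAux_lt_succ {n : ℕ} (a : ℕ) (x : Fin n → ℕ) : NAux a x < NAux (a + 1) x := by
  obtain ⟨h1, h2, h3⟩ := NAux_mem (a + 1) x
  by_contra hle
  push_neg at hle
  have hne := h1 a (Nat.lt_succ_self a)
  have hlt : NAux (a + 1) x < NAux a x := hle.lt_of_ne (fun h => hne h.symm)
  exact (NAux_not_mem_of_lt hlt)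
    ⟨fun a' ha' => h1 a' (ha'.trans (Nat.lt_succ_self a)),
     fun i v hv => h3 a (Nat.lt_succ_self a) i v hv,
     fun a' ha' i v hv => h3 a' (ha'.trans (Nat.lt_succ_self a)) i v hv⟩

lemma NAux_add_le {n : ℕ} (a k : ℕ) (x : Fin n → ℕ) : NAux a x + k ≤ NAux (a + k) x := by
  induction k with
  | zero => simp
  | succ k ih =>
    have h := NAux_lt_succ (a + k) x
    have e : a + (k + 1) = (a + k) + 1 := rfl
    rw [e]
    omega

lemma le_NAux {n : ℕ} (a : ℕ) (x : Fin n → ℕ) : a ≤ NAux a x := by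
  have h := NAux_add_le 0 a x
  rw [Nat.zero_add] at h
  omega

lemma NAux_stable {n : ℕ} {a b : ℕ} {x : Fin n → ℕ} (h : NAux a x = a + ∑ j, x j)
    (hab : a ≤ b) : NAux b x = b + ∑ j, x j := by
  have h1 := NAux_add_le a (b - a) x
  rw [show a + (b - a) = b from by omega] at h1
  have h2 := NAux_le_total b x
  omega

lemma exists_NAux_eq_aux {n : ℕ} (S : ℕ) : ∀ (x : Fin n → ℕ), ∑ j, x j = S →
    ∃ a, NAux a x = a + ∑ j, x j := by
  induction S using Nat.strong_induction_on with
  | _ S ih =>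
    intro x hS
    rcases Nat.eq_zero_or_pos S with h0 | h0
    · exact ⟨0, by have := NAux_le_total 0 x; omega⟩
    · -- find a nonzero pile
      have hex : ∃ i, x i ≠ 0 := by
        by_contra h
        push_neg at h
        have : ∑ j, x j = 0 := Finset.sum_eq_zero (fun i _ => h i)
        omega
      obtain ⟨i, hi⟩ := hex
      set y := Function.update x i (x i - 1) with hy
      have hsum : ∑ j, y j = S - 1 := by
        have h2 := sum_update_add x i (x i - 1)
        rw [← hy] at h2
        omega
      obtain ⟨A₀, hA₀⟩ := ih (S - 1) (by omega) y hsum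
      have hY : ∀ b, A₀ ≤ b → NAux b y = b + (S - 1) := by
        intro b hb
        have := NAux_stable hA₀ hb
        omega
      -- key step: above A₀ + S, the deficit strictly decreases while positive
      have key : ∀ a, A₀ + S ≤ a → NAux a x = a + S ∨ NAux a x + 2 ≤ NAux (a + 1) x := by
        intro a ha
        by_cases hd : NAux a x = a + S
        · exact Or.inl hd
        · right
          by_contra hcon
          push_neg at hcon
          have hstep := NAux_lt_succ a x
          have hsucc : NAux (a + 1) x = NAux a x + 1 := by omega
          have hub : NAux a x ≤ a + S := by have := NAux_le_total a x; omega
          have hlb : a ≤ NAux a x := le_NAux a x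
          obtain ⟨h1, h2, h3⟩ := NAux_mem (a + 1) x
          by_cases hd1 : NAux a x + 1 = a + S
          · -- pile-only move to y has value a + S
            have e1 : NAux (a + 1) y = (a + 1) + (S - 1) := hY (a + 1) (by omega)
            exact h2 i (x i - 1) (by omega) (by rw [← hy]; omega)
          · -- combined move to (NAux a x + 2 - S, y)
            have e2 : NAux (NAux a x + 2 - S) y = (NAux a x + 2 - S) + (S - 1) :=
              hY _ (by omega)
            exact h3 (NAux a x + 2 - S) (by omega) i (x i - 1) (by omega)
              (by rw [← hy]; omega)
      -- descent
      have descent : ∀ k a, A₀ + S ≤ a → a + S ≤ NAux a x + k →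
          ∃ b, NAux b x = b + S := by
        intro k
        induction k with
        | zero =>
          intro a ha hk
          have := NAux_le_total a x
          exact ⟨a, by omega⟩
        | succ k ihk =>
          intro a ha hk
          rcases key a ha with h | h
          · exact ⟨a, h⟩
          · exact ihk (a + 1) (by omega) (by omega)
      obtain ⟨b, hb⟩ := descent S (A₀ + S) le_rfl
        (by have := le_NAux (A₀ + S) x; omega)
      exact ⟨b, by omega⟩

lemma exists_NAux_eq {n : ℕ} (x : Fin n → ℕ) : ∃ a, NAux a x = a + ∑ j, x j :=
  exists_NAux_eq_aux (∑ j, x j) x rfl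

/-- If all piles are at least `1`, then `A(x₂, …, xₙ)` is at least the minimum
over `i` of `A(x₂, …, xᵢ - 1, …, xₙ)`. -/
theorem AAux_recursive_lower_bound {n : ℕ} (hn : 0 < n) (x : Fin n → ℕ)
    (hx : ∀ i, 1 ≤ x i) :
    (Finset.univ.inf' ⟨⟨0, hn⟩, Finset.mem_univ _⟩
      fun i => AAux (Function.update x i (x i - 1))) ≤ AAux x := by
  have hne : {a : ℕ | NAux a x = a + ∑ i, x i}.Nonempty := exists_NAux_eq x
  have hmem : NAux (AAux x) x = AAux x + ∑ i, x i := Nat.sInf_mem hne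
  set a := AAux x with ha
  have hSpos : 1 ≤ ∑ i, x i := le_trans (hx ⟨0, hn⟩)
    (Finset.single_le_sum (fun i _ => Nat.zero_le (x i)) (Finset.mem_univ (⟨0, hn⟩ : Fin n)))
  have hlt : a + (∑ i, x i) - 1 < NAux a x := by omega
  have hnm := NAux_not_mem_of_lt hlt
  have hP1 : ∀ a' < a, NAux a' x ≠ a + (∑ i, x i) - 1 := by
    intro a' ha' h
    have hub := NAux_le_total a' x
    have heq : NAux a' x = a' + ∑ j, x j := by omega
    have hle : AAux x ≤ a' := Nat.sInf_le heq
    omega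
  have hP3 : ∀ a' < a, ∀ (i : Fin n) (v : ℕ), v < x i →
      NAux a' (Function.update x i v) ≠ a + (∑ i, x i) - 1 := by
    intro a' ha' i v hv h
    have hub := NAux_le_total a' (Function.update x i v)
    have h2 := sum_update_add x i v
    omega
  have hP2 : ¬ (∀ (i : Fin n) (v : ℕ), v < x i →
      NAux a (Function.update x i v) ≠ a + (∑ i, x i) - 1) :=
    fun hp2 => hnm ⟨hP1, hp2, hP3⟩
  push_neg at hP2
  obtain ⟨i, v, hv, heq⟩ := hP2
  have hub := NAux_le_total a (Function.update x i v)
  have h2 := sum_update_add x i v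
  have hveq : v = x i - 1 := by omega
  subst hveq
  have hfin : AAux (Function.update x i (x i - 1)) ≤ a := Nat.sInf_le (by
    show NAux a _ = a + ∑ j, Function.update x i (x i - 1) j
    omega)
  exact le_trans (Finset.inf'_le _ (Finset.mem_univ i)) hfin
end

section
/- Let i ≥ 1 and m ≥ 1 be natural numbers, set b = m·2^i + (2^i − 1), and let c be a natural number such that (m·2^i) ⊕ c = m·2^i + c (i.e., the binary expansions of m·2^i and c share no common 1 bits). Then A(b, c) ≤ 1; that is, N(a, b, c) = a + b + c for every a ≥ 1. -/
/-- Sprague–Grundy value of the Auxiliary Nim game `(*a) ⊞ ((*b) ⊕ (*c))`: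
the mex of the Sprague–Grundy values of the one-move successors, which are
`(a',b,c)` with `a' < a`, `(a,b',c)` with `b' < b`, `(a,b,c')` with `c' < c`,
`(a',b',c)` with `a' < a, b' < b`, and `(a',b,c')` with `a' < a, c' < c`. -/
noncomputable def N3 (a b c : ℕ) : ℕ :=
  sInf {m : ℕ |
    (∀ a', a' < a → N3 a' b c ≠ m) ∧
    (∀ b', b' < b → N3 a b' c ≠ m) ∧
    (∀ c', c' < c → N3 a b c' ≠ m) ∧
    (∀ a', a' < a → ∀ b', b' < b → N3 a' b' c ≠ m) ∧
    (∀ a', a' < a → ∀ c', c' < c → N3 a' b c' ≠ m)}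
termination_by a + b + c
decreasing_by all_goals omega

/-- `A3 b c` is the least `a` such that `N3 a b c = a + b + c`. -/
noncomputable def A3 (b c : ℕ) : ℕ := sInf {a : ℕ | N3 a b c = a + b + c}

theorem N3_def (a b c : ℕ) : N3 a b c =
  sInf {m : ℕ |
    (∀ a', a' < a → N3 a' b c ≠ m) ∧
    (∀ b', b' < b → N3 a b' c ≠ m) ∧
    (∀ c', c' < c → N3 a b c' ≠ m) ∧
    (∀ a', a' < a → ∀ b', b' < b → N3 a' b' c ≠ m) ∧
    (∀ a', a' < a → ∀ c', c' < c → N3 a' b c' ≠ m)} := by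
  rw [N3]

lemma N3_le (a b c : ℕ) : N3 a b c ≤ a + b + c := by
  suffices H : ∀ n a b c, a + b + c ≤ n → N3 a b c ≤ a + b + c from
    H (a+b+c) a b c le_rfl
  intro n
  induction n with
  | zero =>
    intro a b c h
    rw [N3_def]
    apply Nat.sInf_le
    refine ⟨?_, ?_, ?_, ?_, ?_⟩ <;> intros <;> omega
  | succ n ih =>
    intro a b c h
    rw [N3_def]
    apply Nat.sInf_le
    refine ⟨fun a' ha' => ?_, fun b' hb' => ?_, fun c' hc' => ?_,
      fun a' ha' b' hb' => ?_, fun a' ha' c' hc' => ?_⟩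
    · have := ih a' b c (by omega); omega
    · have := ih a b' c (by omega); omega
    · have := ih a b c' (by omega); omega
    · have := ih a' b' c (by omega); omega
    · have := ih a' b c' (by omega); omega

lemma N3_zero (b c : ℕ) : N3 0 b c = b ^^^ c := by
  suffices H : ∀ n b c, b + c ≤ n → N3 0 b c = b ^^^ c from H (b+c) b c le_rfl
  intro n
  induction n with
  | zero =>
    intro b c h
    have hb : b = 0 := by omega
    have hc : c = 0 := by omega
    subst hb; subst hc
    rw [N3_def]
    have : (0:ℕ) ∈ {m : ℕ |
        (∀ a', a' < 0 → N3 a' 0 0 ≠ m) ∧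
        (∀ b', b' < 0 → N3 0 b' 0 ≠ m) ∧
        (∀ c', c' < 0 → N3 0 0 c' ≠ m) ∧
        (∀ a', a' < 0 → ∀ b', b' < 0 → N3 a' b' 0 ≠ m) ∧
        (∀ a', a' < 0 → ∀ c', c' < 0 → N3 a' 0 c' ≠ m)} := by
      refine ⟨?_, ?_, ?_, ?_, ?_⟩ <;> intros <;> omega
    simpa using Nat.sInf_le this
  | succ n ih =>
    intro b c h
    rw [N3_def]
    have hmem : b ^^^ c ∈ {m : ℕ |
        (∀ a', a' < 0 → N3 a' b c ≠ m) ∧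
        (∀ b', b' < b → N3 0 b' c ≠ m) ∧
        (∀ c', c' < c → N3 0 b c' ≠ m) ∧
        (∀ a', a' < 0 → ∀ b', b' < b → N3 a' b' c ≠ m) ∧
        (∀ a', a' < 0 → ∀ c', c' < c → N3 a' b c' ≠ m)} := by
      refine ⟨fun a' ha' => by omega, fun b' hb' => ?_, fun c' hc' => ?_,
        fun a' ha' => by omega, fun a' ha' => by omega⟩
      · rw [ih b' c (by omega)]
        intro hEq
        have := congrArg (· ^^^ c) hEq
        simp only [xor_cancel_right] at this
        omega
      · rw [ih b c' (by omega)]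
        intro hEq
        have := congrArg (b ^^^ ·) hEq
        simp only [xor_cancel_left] at this
        omega
    apply le_antisymm (Nat.sInf_le hmem)
    apply le_csInf ⟨_, hmem⟩
    intro v hv
    by_contra hlt
    push_neg at hlt
    rcases Nat.lt_xor_cases hlt with hcase | hcase
    · exact hv.2.1 (v ^^^ c) hcase (by rw [ih _ c (by omega), xor_cancel_right])
    · exact hv.2.2.1 (v ^^^ b) hcase
        (by rw [ih b _ (by omega), ← Nat.xor_comm (v ^^^ b) b, xor_cancel_right])


lemma testBit_base {i x : ℕ} (a : ℕ) (hx : x < 2^i) (j : ℕ) :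
    Nat.testBit (2^i*a + x) j = if j < i then x.testBit j else a.testBit (j-i) := by
  rcases lt_or_ge j i with hj | hj
  · simp only [hj, if_true]
    rw [Nat.testBit_eq_decide_div_mod_eq, Nat.testBit_eq_decide_div_mod_eq]
    have h1 : 2^i*a = 2^j * (2^(i-j)*a) := by rw [← Nat.mul_assoc, ← pow_add]; congr 2; omega
    rw [h1, Nat.mul_add_div (Nat.two_pow_pos j)]
    have h2 : 2^(i-j)*a = 2 * (2^(i-j-1)*a) := by
      rw [← Nat.mul_assoc]; congr 1; rw [← pow_succ']; congr 1; omega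
    rw [h2, Nat.mul_add_mod]
  · simp only [Nat.not_lt.2 hj, if_false]
    rw [Nat.testBit_eq_decide_div_mod_eq, Nat.testBit_eq_decide_div_mod_eq]
    have h1 : (2^i*a + x) / 2^j = a / 2^(j-i) := by
      have : (2:ℕ)^j = 2^i * 2^(j-i) := by rw [← pow_add]; congr 1; omega
      rw [this, ← Nat.div_div_eq_div_mul]
      congr 1
      rw [Nat.mul_add_div (Nat.two_pow_pos i), Nat.div_eq_of_lt hx, Nat.add_zero]
    rw [h1]

lemma split_xor {i x y : ℕ} (a b : ℕ) (hx : x < 2^i) (hy : y < 2^i) :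
    (2^i*a + x) ^^^ (2^i*b + y) = 2^i*(a ^^^ b) + (x ^^^ y) := by
  apply Nat.eq_of_testBit_eq
  intro j
  rw [Nat.testBit_xor, testBit_base a hx, testBit_base b hy,
    testBit_base (a ^^^ b) (Nat.xor_lt_two_pow hx hy)]
  rcases lt_or_ge j i with hj | hj
  · simp [hj]
  · simp [Nat.not_lt.2 hj]

lemma qxor {i s : ℕ} (hs : s < 2^i) : (2^i - 1) ^^^ s = 2^i - 1 - s := by
  apply Nat.eq_of_testBit_eq
  intro j
  have h1 : 2^i - 1 - s = 2^i - (s+1) := by omega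
  rw [Nat.testBit_xor, h1, Nat.testBit_two_pow_sub_succ hs, Nat.testBit_two_pow_sub_one]
  rcases lt_or_ge j i with hj | hj
  · simp [hj]
  · have : s < 2^j := lt_of_lt_of_le hs (Nat.pow_le_pow_right (by norm_num) hj)
    simp [Nat.not_lt.2 hj, Nat.testBit_lt_two_pow this]

lemma main_aux (E m : ℕ) (hE1 : 2 ≤ E) (hm : 1 ≤ m)
    (split : ∀ a b x y : ℕ, x < E → y < E →
      (E*a+x) ^^^ (E*b+y) = E*(a^^^b) + (x^^^y))
    (qx : ∀ s, s < E → (E-1) ^^^ s = E-1-s) :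
    ∀ n c a, a + c ≤ n → 1 ≤ a → (E*m) ^^^ c = E*m + c →
      N3 a (E*m + (E-1)) c = a + (E*m + (E-1)) + c := by
  intro n
  induction n with
  | zero => intro c a h ha; omega
  | succ n ih =>
    intro c a h ha hc
    set b := E*m + (E-1) with hb
    obtain ⟨e, r, hrE, hcer⟩ : ∃ e r, r < E ∧ c = E*e + r :=
      ⟨c/E, c%E, Nat.mod_lt _ (by omega), (Nat.div_add_mod c E).symm⟩
    have hMX : E*(m+e) = E*m + E*e := Nat.mul_add E m e
    -- key fact: m ^^^ e = m + e
    have hK : m ^^^ e = m + e := by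
      have h0 : (E*m+0) ^^^ (E*e+r) = E*(m^^^e) + (0^^^r) :=
        split m e 0 r (by omega) hrE
      rw [Nat.add_zero, Nat.zero_xor] at h0
      rw [hcer] at hc
      have h1 : E*(m^^^e) + r = E*m + (E*e + r) := by rw [← h0]; exact hc
      have h2 : E*(m^^^e) = E*(m+e) := by omega
      exact Nat.eq_of_mul_eq_mul_left (by omega) h2
    have hEK : E*(m^^^e) = E*m + E*e := by rw [hK]; exact hMX
    -- F2
    have F2 : ∀ s, s < E → b ^^^ (E*e+s) = E*(m+e) + (E-1-s) := by
      intro s hs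
      have h0 : (E*m+(E-1)) ^^^ (E*e+s) = E*(m^^^e) + ((E-1)^^^s) :=
        split m e (E-1) s (by omega) hs
      rw [hb, h0, hK, qx s hs]
    have fam : ∀ s, s < E → (E*m) ^^^ (E*e+s) = E*m + (E*e+s) := by
      intro s hs
      have h0 : (E*m+0) ^^^ (E*e+s) = E*(m^^^e) + (0^^^s) :=
        split m e 0 s (by omega) hs
      rw [Nat.add_zero, Nat.zero_xor] at h0
      rw [h0]
      omega
    have hbc : b ^^^ c = E*(m+e) + (E-1-r) := by rw [hcer]; exact F2 r hrE
    rw [N3_def]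
    have hmem : a + b + c ∈ {v : ℕ |
        (∀ a', a' < a → N3 a' b c ≠ v) ∧
        (∀ b', b' < b → N3 a b' c ≠ v) ∧
        (∀ c', c' < c → N3 a b c' ≠ v) ∧
        (∀ a', a' < a → ∀ b', b' < b → N3 a' b' c ≠ v) ∧
        (∀ a', a' < a → ∀ c', c' < c → N3 a' b c' ≠ v)} := by
      refine ⟨fun a' ha' => ?_, fun b' hb' => ?_, fun c' hc' => ?_,
        fun a' ha' b' hb' => ?_, fun a' ha' c' hc' => ?_⟩
      · have := N3_le a' b c; omega
      · have := N3_le a b' c; omega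
      · have := N3_le a b c'; omega
      · have := N3_le a' b' c; omega
      · have := N3_le a' b c'; omega
    apply le_antisymm (Nat.sInf_le hmem)
    apply le_csInf ⟨_, hmem⟩
    intro v hv
    by_contra hlt
    push_neg at hlt
    obtain ⟨cl1, cl2, cl3, cl4, cl5⟩ := hv
    by_cases h1 : v ^^^ b < c
    · exact cl5 0 ha (v ^^^ b) h1
        (by rw [N3_zero, ← Nat.xor_comm (v ^^^ b) b, xor_cancel_right])
    by_cases h2 : v ^^^ c < b
    · exact cl4 0 ha (v ^^^ c) h2 (by rw [N3_zero, xor_cancel_right])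
    have hge : b ^^^ c ≤ v := by
      by_contra hlt2
      push_neg at hlt2
      rcases Nat.lt_xor_cases hlt2 with hcase | hcase
      · exact h2 hcase
      · exact h1 hcase
    rcases eq_or_lt_of_le hge with heq | hgt
    · exact cl1 0 ha (by rw [N3_zero, ← heq])
    -- v > b ^^^ c; show v > E*(m+e) + (E-1)
    have hgt2 : E*(m+e) + (E-1) < v := by
      by_contra hle2
      push_neg at hle2
      obtain ⟨s, hs⟩ : ∃ s, s = E*(m+e) + (E-1) - v := ⟨_, rfl⟩
      have hsr : s < r := by omega
      have hxor : b ^^^ (E*e+s) = v := by rw [F2 s (by omega)]; omega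
      have hvb : v ^^^ b = E*e+s := by
        rw [← hxor, Nat.xor_comm b _, xor_cancel_right]
      exact h1 (by rw [hvb]; omega)
    by_cases h4 : v ≤ b + c
    · -- family move on c
      obtain ⟨c', hc'⟩ : ∃ c', c' = v - 1 - b := ⟨_, rfl⟩
      have hc'lt : c' < c := by omega
      obtain ⟨s', hs'⟩ : ∃ s', s' = c' - E*e := ⟨_, rfl⟩
      have hs'r : s' < r := by omega
      have hc'form : c' = E*e + s' := by omega
      have hfam : (E*m) ^^^ c' = E*m + c' := by
        rw [hc'form]; exact fam s' (by omega)
      have hIH : N3 1 b c' = 1 + b + c' := ih c' 1 (by omega) le_rfl hfam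
      rcases eq_or_lt_of_le ha with ha1 | ha2
      · exact cl3 c' hc'lt (by rw [← ha1, hIH]; omega)
      · exact cl5 1 ha2 c' hc'lt (by rw [hIH]; omega)
    · push_neg at h4
      obtain ⟨a', ha'⟩ : ∃ a', a' = v - b - c := ⟨_, rfl⟩
      have ha'1 : 1 ≤ a' := by omega
      have ha'a : a' < a := by omega
      have hIH : N3 a' b c = a' + b + c := ih c a' (by omega) ha'1 hc
      exact cl1 a' ha'a (by rw [hIH]; omega)

/-- For `i ≥ 1`, `m ≥ 1`, `b = m * 2^i + (2^i - 1)` and `c` with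
`(m * 2^i) ⊕ c = m * 2^i + c`: `A(b,c) ≤ 1`, that is,
`N(a,b,c) = a + b + c` for every `a ≥ 1`. -/
theorem A3_trailing_ones (i m c : ℕ) (hi : 1 ≤ i) (hm : 1 ≤ m)
    (hc : (m * 2 ^ i) ^^^ c = m * 2 ^ i + c) :
    A3 (m * 2 ^ i + (2 ^ i - 1)) c ≤ 1 ∧
    ∀ a : ℕ, 1 ≤ a →
      N3 a (m * 2 ^ i + (2 ^ i - 1)) c = a + (m * 2 ^ i + (2 ^ i - 1)) + c := by
  have hE1 : 2 ≤ 2 ^ i := by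
    calc 2 = 2 ^ 1 := by norm_num
    _ ≤ 2 ^ i := Nat.pow_le_pow_right (by norm_num) hi
  rw [mul_comm m (2 ^ i)] at hc ⊢
  have key : ∀ a : ℕ, 1 ≤ a →
      N3 a (2 ^ i * m + (2 ^ i - 1)) c = a + (2 ^ i * m + (2 ^ i - 1)) + c := by
    intro a ha
    exact main_aux (2 ^ i) m hE1 hm
      (fun a b x y hx hy => split_xor a b hx hy)
      (fun s hs => qxor hs) (a + c) c a le_rfl ha hc
  refine ⟨?_, key⟩
  exact Nat.sInf_le (key 1 le_rfl)
end
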